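/- For bounded operators T, S on a complex Hilbert space H, T is Birkhoff–James numerical radius orthogonal to S (i.e. w(T + ξS) ≥ w(T) for all ξ ∈ ℂ) if and only if w(T + ξS)² ≥ w(T)² + |ξ|²·c(S)² for all ξ ∈ ℂ, where w(T) = sup{|⟨Tx,x⟩| : ‖x‖=1} and c(S) = inf{|⟨Sx,x⟩| : ‖x‖=1}. -/

import Mathlib

open Filter Topology

/-- The numerical radius `w(T) = sup {|⟨Tx, x⟩| : ‖x‖ = 1}` (paper convention
`⟨Tx, x⟩` corresponds to Mathlib's `⟪ x, T x ⟫`). -/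
noncomputable def numRad {H : Type*} [NormedAddCommGroup H] [InnerProductSpace ℂ H]
    (T : H →L[ℂ] H) : ℝ :=
  sSup {r : ℝ | ∃ x : H, ‖x‖ = 1 ∧ r = ‖@inner ℂ H _ x (T x)‖}

/-- The Crawford number `c(S) = inf {|⟨Sx, x⟩| : ‖x‖ = 1}`. -/
noncomputable def crawford {H : Type*} [NormedAddCommGroup H] [InnerProductSpace ℂ H]
    (S : H →L[ℂ] H) : ℝ :=
  sInf {r : ℝ | ∃ x : H, ‖x‖ = 1 ∧ r = ‖@inner ℂ H _ x (S x)‖}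

section aux
variable {H : Type*} [NormedAddCommGroup H] [InnerProductSpace ℂ H]

private lemma abs_inner_le_opNorm (T : H →L[ℂ] H) {x : H} (hx : ‖x‖ = 1) :
    ‖@inner ℂ H _ x (T x)‖ ≤ ‖T‖ := by
  calc ‖@inner ℂ H _ x (T x)‖ ≤ ‖x‖ * ‖T x‖ := by
        simpa using norm_inner_le_norm (𝕜 := ℂ) x (T x)
    _ ≤ ‖x‖ * (‖T‖ * ‖x‖) := by gcongr; exact T.le_opNorm x
    _ = ‖T‖ := by rw [hx]; ring

private lemma numRad_bddAbove (T : H →L[ℂ] H) :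
    BddAbove {r : ℝ | ∃ x : H, ‖x‖ = 1 ∧ r = ‖@inner ℂ H _ x (T x)‖} := by
  refine ⟨‖T‖, ?_⟩
  rintro r ⟨x, hx, rfl⟩
  exact abs_inner_le_opNorm T hx

private lemma abs_inner_le_numRad (T : H →L[ℂ] H) {x : H} (hx : ‖x‖ = 1) :
    ‖@inner ℂ H _ x (T x)‖ ≤ numRad T :=
  le_csSup (numRad_bddAbove T) ⟨x, hx, rfl⟩

private lemma exists_unit_vector [Nontrivial H] : ∃ x : H, ‖x‖ = 1 := by
  obtain ⟨y, hy⟩ := exists_ne (0 : H)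
  exact ⟨‖y‖⁻¹ • y, by simp [norm_smul, inv_mul_cancel₀ (norm_ne_zero_iff.2 hy)]⟩

private lemma numRad_nonneg [Nontrivial H] (T : H →L[ℂ] H) : 0 ≤ numRad T := by
  obtain ⟨x, hx⟩ := exists_unit_vector (H := H)
  exact le_trans (by positivity) (abs_inner_le_numRad T hx)

private lemma crawford_nonneg [Nontrivial H] (S : H →L[ℂ] H) : 0 ≤ crawford S := by
  apply le_csInf
  · obtain ⟨x, hx⟩ := exists_unit_vector (H := H)
    exact ⟨_, x, hx, rfl⟩
  · rintro r ⟨x, hx, rfl⟩; positivity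

private lemma crawford_le_abs_inner (S : H →L[ℂ] H) {x : H} (hx : ‖x‖ = 1) :
    crawford S ≤ ‖@inner ℂ H _ x (S x)‖ := by
  apply csInf_le
  · exact ⟨0, by rintro r ⟨y, hy, rfl⟩; positivity⟩
  · exact ⟨x, hx, rfl⟩

private lemma abs_add_sq (z u : ℂ) : ‖z + u‖ ^ 2
    = ‖z‖ ^ 2 + 2 * (z * (starRingEnd ℂ) u).re + ‖u‖ ^ 2 := by
  simp [Complex.sq_norm, Complex.normSq_add]; ring

private lemma abs_add_real_smul_sq (t : ℝ) (z u : ℂ) : ‖z + (t : ℂ) * u‖ ^ 2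
    = ‖z‖ ^ 2 + 2 * t * (z * (starRingEnd ℂ) u).re + t ^ 2 * ‖u‖ ^ 2 := by
  simp [Complex.sq_norm, Complex.normSq_add, Complex.mul_re, Complex.mul_im, map_mul]
  ring

private lemma inner_add_smul_apply (T S : H →L[ℂ] H) (ξ : ℂ) (x : H) :
    (@inner ℂ H _ x ((T + ξ • S) x))
      = @inner ℂ H _ x (T x) + ξ * @inner ℂ H _ x (S x) := by
  simp [inner_add_right, inner_smul_right]

end aux

set_option maxHeartbeats 1000000 in
private lemma arith_contradiction (w a c N η t p q R : ℝ)
    (hN : 0 ≤ N) (hc : 0 ≤ c) (hη : 0 < η)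
    (ht0 : 0 < t) (ht1 : t ≤ 1)
    (htK : t * (2 * w + a ^ 2 * N ^ 2 + 1) ≤ η / 2)
    (hp0 : 0 ≤ p) (hpw : p ≤ w) (hqN : q ≤ N) (hcq : c ≤ q)
    (hF3 : p ^ 2 + 2 * R + a ^ 2 * q ^ 2 ≤ w ^ 2 + a ^ 2 * c ^ 2 - η)
    (hF4 : (w - t ^ 2) ^ 2 < p ^ 2 + 2 * t * R + t ^ 2 * (a ^ 2 * q ^ 2)) : False := by
  have hc2 : c ^ 2 ≤ q ^ 2 := by nlinarith
  have hcq2 : a ^ 2 * c ^ 2 ≤ a ^ 2 * q ^ 2 :=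
    mul_le_mul_of_nonneg_left hc2 (sq_nonneg a)
  have h2R : 2 * R ≤ w ^ 2 - η - p ^ 2 := by linarith
  have hq2 : q ^ 2 ≤ N ^ 2 := by nlinarith
  have haq : a ^ 2 * q ^ 2 ≤ a ^ 2 * N ^ 2 :=
    mul_le_mul_of_nonneg_left hq2 (sq_nonneg a)
  have hqN2 : t ^ 2 * (a ^ 2 * q ^ 2) ≤ t ^ 2 * (a ^ 2 * N ^ 2) :=
    mul_le_mul_of_nonneg_left haq (sq_nonneg t)
  have hfin : (w - t ^ 2) ^ 2 < p ^ 2 + t * (w ^ 2 - η - p ^ 2) + t ^ 2 * (a ^ 2 * N ^ 2) := by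
    nlinarith [mul_le_mul_of_nonneg_left h2R ht0.le]
  have hw2 : p ^ 2 ≤ w ^ 2 := by nlinarith
  have e1 : 0 ≤ (1 - t) * (w ^ 2 - p ^ 2) :=
    mul_nonneg (by linarith) (by linarith)
  have e2 : t * η < 2 * w * t ^ 2 + t ^ 2 * (a ^ 2 * N ^ 2) := by
    nlinarith [pow_pos ht0 4]
  have e3 : t * (2 * w + a ^ 2 * N ^ 2) ≤ η / 2 - t := by linarith
  nlinarith [e2, mul_le_mul_of_nonneg_left e3 ht0.le, mul_pos ht0 hη]

private lemma zero_case (w W a c η : ℝ) (hwz : 0 = w) (hW0 : 0 ≤ W)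
    (ha0 : 0 ≤ a) (hc0 : 0 ≤ c) (hη0 : 0 < η)
    (hηeq : η = w ^ 2 + a ^ 2 * c ^ 2 - W ^ 2) (hac : a * c ≤ W) : False := by
  nlinarith [mul_nonneg ha0 hc0, mul_self_le_mul_self (mul_nonneg ha0 hc0) hac]

private lemma rev_case (u v d : ℝ) (hu : 0 ≤ u) (hv : 0 ≤ v) (hd : 0 ≤ d)
    (h : u ^ 2 + d ≤ v ^ 2) : u ≤ v := by
  nlinarith

private lemma t_facts (w η K : ℝ) (hw : 0 < w) (hη : 0 < η) (hK : 0 < K) :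
    ∃ t : ℝ, 0 < t ∧ t ≤ 1 ∧ t ^ 2 ≤ w ∧ t * K ≤ η / 2 := by
  refine ⟨min (min 1 w) (η / (2 * K)), lt_min (lt_min one_pos hw) (by positivity), ?_, ?_, ?_⟩
  · exact le_trans (min_le_left _ _) (min_le_left _ _)
  · have h1 : min (min 1 w) (η / (2 * K)) ≤ 1 := le_trans (min_le_left _ _) (min_le_left _ _)
    have h2 : min (min 1 w) (η / (2 * K)) ≤ w := le_trans (min_le_left _ _) (min_le_right _ _)
    have h3 : 0 < min (min 1 w) (η / (2 * K)) := lt_min (lt_min one_pos hw) (by positivity)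
    nlinarith
  · have h1 : min (min 1 w) (η / (2 * K)) ≤ η / (2 * K) := min_le_right _ _
    calc min (min 1 w) (η / (2 * K)) * K ≤ (η / (2 * K)) * K := by gcongr
      _ = η / 2 := by field_simp

set_option maxHeartbeats 1000000 in
theorem numRad_BJ_orthogonal_iff_sq_ineq
    {H : Type*} [NormedAddCommGroup H] [InnerProductSpace ℂ H] [CompleteSpace H]
    [Nontrivial H] (T S : H →L[ℂ] H) :
    (∀ ξ : ℂ, numRad T ≤ numRad (T + ξ • S)) ↔
      (∀ ξ : ℂ,
        numRad T ^ 2 + ‖ξ‖ ^ 2 * crawford S ^ 2 ≤ numRad (T + ξ • S) ^ 2) := by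
  constructor
  · intro h ξ
    by_contra hcon
    push_neg at hcon
    have hw0 : 0 ≤ numRad T := numRad_nonneg T
    have hW0 : 0 ≤ numRad (T + ξ • S) := numRad_nonneg _
    have hc0 : 0 ≤ crawford S := crawford_nonneg S
    have ha0 : 0 ≤ ‖ξ‖ := norm_nonneg ξ
    have hN0 : 0 ≤ ‖S‖ := norm_nonneg S
    obtain ⟨η, hη0, hηeq⟩ : ∃ η : ℝ, 0 < η ∧
        η = numRad T ^ 2 + ‖ξ‖ ^ 2 * crawford S ^ 2 - numRad (T + ξ • S) ^ 2 :=
      ⟨_, by linarith, rfl⟩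
    rcases eq_or_lt_of_le hw0 with hwz | hwpos
    · -- numRad T = 0 : direct contradiction without perturbation
      obtain ⟨x, hx⟩ := exists_unit_vector (H := H)
      have hp : ‖@inner ℂ H _ x (T x)‖ ≤ numRad T := abs_inner_le_numRad T hx
      have hα : @inner ℂ H _ x (T x) = 0 := by
        refine norm_eq_zero.mp (le_antisymm ?_ (by positivity))
        rw [← hwz] at hp; exact hp
      have hq : crawford S ≤ ‖@inner ℂ H _ x (S x)‖ := crawford_le_abs_inner S hx
      have hWx : ‖@inner ℂ H _ x (T x) + ξ * @inner ℂ H _ x (S x)‖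
          ≤ numRad (T + ξ • S) := by
        have h1 := abs_inner_le_numRad (T + ξ • S) hx
        rwa [inner_add_smul_apply] at h1
      have hac : ‖ξ‖ * crawford S ≤ numRad (T + ξ • S) := by
        refine le_trans ?_ hWx
        rw [hα, zero_add, norm_mul]
        gcongr
      exact zero_case _ _ _ _ _ hwz hW0 ha0 hc0 hη0 hηeq hac
    · -- numRad T > 0
      obtain ⟨t, ht0, ht1, ht2, htK⟩ :=
        t_facts (numRad T) η (2 * numRad T + ‖ξ‖ ^ 2 * ‖S‖ ^ 2 + 1)
          hwpos hη0 (by positivity)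
      have hlt : numRad T - t ^ 2 < numRad (T + ((t : ℂ) * ξ) • S) := by
        have hh := h ((t : ℂ) * ξ)
        have := pow_pos ht0 2
        linarith
      obtain ⟨r, ⟨x, hx, rfl⟩, hr⟩ := exists_lt_of_lt_csSup
        (by obtain ⟨y, hy⟩ := exists_unit_vector (H := H); exact ⟨_, y, hy, rfl⟩) hlt
      have hp0 : 0 ≤ ‖@inner ℂ H _ x (T x)‖ := norm_nonneg _
      have hpw : ‖@inner ℂ H _ x (T x)‖ ≤ numRad T := abs_inner_le_numRad T hx
      have hqN : ‖@inner ℂ H _ x (S x)‖ ≤ ‖S‖ := abs_inner_le_opNorm S hx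
      have hcq : crawford S ≤ ‖@inner ℂ H _ x (S x)‖ := crawford_le_abs_inner S hx
      -- F3
      have hF3 : ‖@inner ℂ H _ x (T x)‖ ^ 2
          + 2 * ((@inner ℂ H _ x (T x))
              * ((starRingEnd ℂ) ξ * (starRingEnd ℂ) (@inner ℂ H _ x (S x)))).re
          + ‖ξ‖ ^ 2 * ‖@inner ℂ H _ x (S x)‖ ^ 2
          ≤ numRad T ^ 2 + ‖ξ‖ ^ 2 * crawford S ^ 2 - η := by
        have h1 : ‖@inner ℂ H _ x (T x) + ξ * @inner ℂ H _ x (S x)‖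
            ≤ numRad (T + ξ • S) := by
          have hh := abs_inner_le_numRad (T + ξ • S) hx
          rwa [inner_add_smul_apply] at hh
        have h2 := pow_le_pow_left₀ (norm_nonneg _) h1 2
        rw [abs_add_sq, map_mul, norm_mul, mul_pow] at h2
        linarith
      -- F4
      have hF4 : (numRad T - t ^ 2) ^ 2
          < ‖@inner ℂ H _ x (T x)‖ ^ 2
          + 2 * t * ((@inner ℂ H _ x (T x))
              * ((starRingEnd ℂ) ξ * (starRingEnd ℂ) (@inner ℂ H _ x (S x)))).re
          + t ^ 2 * (‖ξ‖ ^ 2 * ‖@inner ℂ H _ x (S x)‖ ^ 2) := by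
        have h2 : numRad T - t ^ 2
            < ‖@inner ℂ H _ x (T x) + ((t : ℂ) * ξ) * @inner ℂ H _ x (S x)‖ := by
          have hh := hr
          rwa [inner_add_smul_apply] at hh
        have h4 : 0 ≤ numRad T - t ^ 2 := by linarith
        have h5 := pow_lt_pow_left₀ h2 h4 two_ne_zero
        rw [mul_assoc, abs_add_real_smul_sq, map_mul, norm_mul, mul_pow] at h5
        linarith
      exact arith_contradiction (numRad T) (‖ξ‖) (crawford S) ‖S‖ η t _ _ _
        hN0 hc0 hη0 ht0 ht1 htK hp0 hpw hqN hcq hF3 hF4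
  · intro h ξ
    exact rev_case _ _ _ (numRad_nonneg T) (numRad_nonneg _) (by positivity) (h ξ)
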